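/- arXiv:2311.06901 — 5 statements merged into one kernel-verified Lean document; each statement's English description precedes it below -/
import Mathlib

section
/- Let I be a nonempty set of non-negative integers and let S ⊆ ℕ^(I) be a gap absorbing monoid. Then the catenary degree of S satisfies c(S) ≤ 4. -/
open Pointwise

section Defs

variable {M : Type*} [AddCommMonoid M] [PartialOrder M]

/-- `S* = S \ {0}`. -/
def Sstar (S : AddSubmonoid M) : Set M := (S : Set M) \ {0}

/-- The set of gaps `H(S)`, the complement of `S`. -/
def Gaps (S : AddSubmonoid M) : Set M := (S : Set M)ᶜ

/-- The set of atoms `A(S) = S* \ (S* + S*)`. -/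
def Atoms (S : AddSubmonoid M) : Set M := Sstar S \ (Sstar S + Sstar S)

/-- `S` is an ideal extension: `S* + M ⊆ S*`. -/
def IsIdealExtension (S : AddSubmonoid M) : Prop :=
  ∀ s ∈ Sstar S, ∀ x : M, s + x ∈ Sstar S

/-- `S` is gap absorbing. -/
def IsGapAbsorbing (S : AddSubmonoid M) : Prop :=
  Gaps S + Gaps S ⊆ Gaps S ∪ Atoms S ∪ (Atoms S + Atoms S) ∧
  Gaps S + Atoms S ⊆ Atoms S ∪ (Atoms S + Atoms S)

/-- `M(S)`: minimal elements of `S*` with respect to `≤`. -/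
def Mins (S : AddSubmonoid M) : Set M :=
  {m | m ∈ Sstar S ∧ ∀ t ∈ Sstar S, t ≤ m → t = m}

/-- `n`-fold sumset, with `0`-fold sumset `{0}`. -/
def nfold : ℕ → Set M → Set M
  | 0, _ => {0}
  | n + 1, X => nfold n X + X

/-- The set of lengths `L(s) = {n : s ∈ nA(S)}`. -/
def Lset (S : AddSubmonoid M) (s : M) : Set ℕ := {n | s ∈ nfold n (Atoms S)}

/-- The minimal factorization length `ℓ(s)`. -/
noncomputable def minLen (S : AddSubmonoid M) (s : M) : ℕ := sInf (Lset S s)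

/-- `X` is closed under intervals. -/
def ClosedUnderIntervals (X : Set M) : Prop :=
  ∀ u ∈ X, ∀ v ∈ X, u ≤ v → Set.Icc u v ⊆ X

/-- `a ≤_S b`, i.e. `b - a ∈ S`. -/
def dvdS (S : AddSubmonoid M) (a b : M) : Prop := ∃ t ∈ S, a + t = b

end Defs

section Factorizations

variable {M : Type*} [AddCommMonoid M] [PartialOrder M]

/-- The element represented by a factorization, i.e. a finitely supported
function from the atoms to `ℕ`. -/
noncomputable def factSum (S : AddSubmonoid M) (z : ↥(Atoms S) →₀ ℕ) : M :=
  z.sum fun a n => n • (a : M)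

/-- The set of factorizations of `s` into atoms of `S`. -/
noncomputable def Zset (S : AddSubmonoid M) (s : M) : Set (↥(Atoms S) →₀ ℕ) :=
  {z | factSum S z = s}

end Factorizations

section Distance

/-- Length of a factorization. -/
def flen {α : Type*} (z : α →₀ ℕ) : ℕ := z.sum fun _ n => n

/-- Distance between two factorizations:
`d(u,v) = max (|u - u ⊓ v|, |v - u ⊓ v|)`. -/
noncomputable def fdist {α : Type*} (u v : α →₀ ℕ) : ℕ :=
  max (flen (u - u ⊓ v)) (flen (v - u ⊓ v))

namespace GA
variable {α : Type*}

theorem flen_eq (z : α →₀ ℕ) : flen z = z.sum fun _ n => n := rfl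

theorem flen_add (u v : α →₀ ℕ) : flen (u + v) = flen u + flen v := by
  simpa [flen] using Finsupp.sum_add_index' (by simp) (by simp)

theorem flen_single (a : α) (n : ℕ) : flen (Finsupp.single a n) = n := by
  simp [flen, Finsupp.sum_single_index]

theorem flen_eq_zero {z : α →₀ ℕ} : flen z = 0 ↔ z = 0 := by
  constructor
  · intro h
    ext a
    simp only [Finsupp.coe_zero, Pi.zero_apply]
    by_contra ha
    have hmem : a ∈ z.support := Finsupp.mem_support_iff.mpr ha
    have h2 : z a ≤ flen z := Finset.single_le_sum (fun i _ => Nat.zero_le _) hmem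
    omega
  · rintro rfl; simp [flen]

theorem flen_mono {u v : α →₀ ℕ} (h : u ≤ v) : flen u ≤ flen v := by
  obtain ⟨w, rfl⟩ := exists_add_of_le h
  rw [flen_add]; omega

theorem extract {z : α →₀ ℕ} (h : z ≠ 0) :
    ∃ a w, z = Finsupp.single a 1 + w ∧ flen z = flen w + 1 := by
  have : ∃ a, z a ≠ 0 := by
    by_contra hc; push_neg at hc; exact h (Finsupp.ext fun a => hc a)
  obtain ⟨a, ha⟩ := this
  have h1 : Finsupp.single a 1 ≤ z := Finsupp.single_le_iff.mpr (by omega)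
  refine ⟨a, z - Finsupp.single a 1, ?_, ?_⟩
  · rw [add_tsub_cancel_of_le h1]
  · have := flen_add (Finsupp.single a 1) (z - Finsupp.single a 1)
    rw [add_tsub_cancel_of_le h1] at this
    rw [this, flen_single]; omega

theorem inf_add_right (u v w : α →₀ ℕ) : (u + w) ⊓ (v + w) = u ⊓ v + w := by
  ext i
  simp only [Finsupp.inf_apply, Finsupp.add_apply]
  omega

theorem tsub_add_right (u v w : α →₀ ℕ) : (u + w) - (v + w) = u - v := by
  ext i
  simp only [Finsupp.tsub_apply, Finsupp.add_apply]
  omega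

theorem fdist_add_right (u v w : α →₀ ℕ) : fdist (u + w) (v + w) = fdist u v := by
  rw [fdist, fdist, inf_add_right, tsub_add_right, tsub_add_right]

theorem fdist_le_max (u v : α →₀ ℕ) : fdist u v ≤ max (flen u) (flen v) := by
  have h1 : flen (u - u ⊓ v) ≤ flen u := flen_mono tsub_le_self
  have h2 : flen (v - u ⊓ v) ≤ flen v := flen_mono tsub_le_self
  simp only [fdist]; omega

theorem fdist_swap_le (y w r : α →₀ ℕ) : fdist (y + r) (w + r) ≤ max (flen y) (flen w) := by
  rw [fdist_add_right]; exact fdist_le_max y w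

end GA

namespace GA2
variable {σ : Type*} {S : AddSubmonoid (σ →₀ ℕ)}

theorem factSum_add (u v : ↥(Atoms S) →₀ ℕ) :
    factSum S (u + v) = factSum S u + factSum S v := by
  simpa [factSum] using Finsupp.sum_add_index' (by simp) (by intros; rw [add_smul])

theorem factSum_single (a : ↥(Atoms S)) (n : ℕ) :
    factSum S (Finsupp.single a n) = n • (a : σ →₀ ℕ) := by
  simp [factSum, Finsupp.sum_single_index]

theorem factSum_single_one (a : ↥(Atoms S)) :
    factSum S (Finsupp.single a 1) = (a : σ →₀ ℕ) := by
  simp [factSum_single]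

theorem factSum_zero : factSum S (0 : ↥(Atoms S) →₀ ℕ) = 0 := by simp [factSum]

theorem atoms_subset_sstar : Atoms S ⊆ Sstar S := fun a ha => ha.1

theorem atom_ne_zero {a : σ →₀ ℕ} (ha : a ∈ Atoms S) : a ≠ 0 := ha.1.2

theorem atom_mem {a : σ →₀ ℕ} (ha : a ∈ Atoms S) : a ∈ S := ha.1.1

theorem sstar_mk {a : σ →₀ ℕ} (h : a ∈ S) (h0 : a ≠ 0) : a ∈ Sstar S := ⟨h, h0⟩

theorem sstar_add {a b : σ →₀ ℕ} (ha : a ∈ Sstar S) (hb : b ∈ S) : a + b ∈ Sstar S := by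
  refine ⟨S.add_mem ha.1 hb, ?_⟩
  intro h
  exact ha.2 (add_eq_zero.mp h).1

theorem factSum_mem (w : ↥(Atoms S) →₀ ℕ) : factSum S w ∈ S := by
  classical
  induction w using Finsupp.induction with
  | zero => simp [factSum_zero]
  | single_add a n w _ _ ih =>
    rw [factSum_add, factSum_single]
    exact S.add_mem (S.nsmul_mem (atom_mem a.2) n) ih

theorem factSum_eq_zero {w : ↥(Atoms S) →₀ ℕ} (h : factSum S w = 0) : w = 0 := by
  by_contra hw
  obtain ⟨a, w', rfl, -⟩ := GA.extract hw
  rw [factSum_add, factSum_single_one] at h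
  exact atom_ne_zero a.2 (add_eq_zero.mp h).1

/-- Riesz decomposition in `σ →₀ ℕ`. -/
theorem riesz {x u v : σ →₀ ℕ} (h : x ≤ u + v) :
    ∃ x₁ x₂, x = x₁ + x₂ ∧ x₁ ≤ u ∧ x₂ ≤ v := by
  refine ⟨x ⊓ u, x - x ⊓ u, ?_, inf_le_right, ?_⟩
  · rw [add_tsub_cancel_of_le inf_le_left]
  · rw [Finsupp.le_def] at h ⊢
    intro i
    have := h i
    simp only [Finsupp.tsub_apply, Finsupp.inf_apply, Finsupp.add_apply] at *
    omega

end GA2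

namespace GA3
open GA GA2
variable {σ : Type*} {S : AddSubmonoid (σ →₀ ℕ)}

theorem mem_gaps {x : σ →₀ ℕ} : x ∈ Gaps S ↔ x ∉ S := Iff.rfl

theorem gaps_ne_zero {x : σ →₀ ℕ} (h : x ∈ Gaps S) : x ≠ 0 := by
  rintro rfl; exact h S.zero_mem

/-- Factorizations with bounded length. -/
def Small (S : AddSubmonoid (σ →₀ ℕ)) (x : σ →₀ ℕ) (n : ℕ) : Prop :=
  ∃ w : ↥(Atoms S) →₀ ℕ, factSum S w = x ∧ flen w ≤ n

theorem small_mono {x : σ →₀ ℕ} {m n : ℕ} (h : Small S x m) (hmn : m ≤ n) : Small S x n := by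
  obtain ⟨w, hw, hl⟩ := h; exact ⟨w, hw, hl.trans hmn⟩

theorem small_atom {a : σ →₀ ℕ} (ha : a ∈ Atoms S) : Small S a 1 :=
  ⟨Finsupp.single ⟨a, ha⟩ 1, factSum_single_one _, by rw [flen_single]⟩

theorem small_add {x y : σ →₀ ℕ} {m n : ℕ} (hx : Small S x m) (hy : Small S y n) :
    Small S (x + y) (m + n) := by
  obtain ⟨w1, hw1, hl1⟩ := hx
  obtain ⟨w2, hw2, hl2⟩ := hy
  exact ⟨w1 + w2, by rw [factSum_add, hw1, hw2], by rw [flen_add]; omega⟩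

theorem small_AA {x : σ →₀ ℕ} (h : x ∈ Atoms S + Atoms S) : Small S x 2 := by
  rcases Set.mem_add.mp h with ⟨a, ha, b, hb, rfl⟩
  exact small_add (small_atom ha) (small_atom hb)

theorem small_of_atoms_union {x : σ →₀ ℕ} (h : x ∈ Atoms S ∪ (Atoms S + Atoms S)) :
    Small S x 2 := by
  rcases h with h | h
  · exact small_mono (small_atom h) (by omega)
  · exact small_AA h

theorem small_gapAtom (hS : IsGapAbsorbing S) {h a : σ →₀ ℕ}
    (hh : h ∈ Gaps S) (ha : a ∈ Atoms S) : Small S (h + a) 2 :=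
  small_of_atoms_union (hS.2 (Set.add_mem_add hh ha))

theorem gap_add_gap (hS : IsGapAbsorbing S) {h h' : σ →₀ ℕ}
    (hh : h ∈ Gaps S) (hh' : h' ∈ Gaps S) : (h + h') ∈ Gaps S ∨ Small S (h + h') 2 := by
  rcases hS.1 (Set.add_mem_add hh hh') with (hg | hg) | hg
  · exact Or.inl hg
  · exact Or.inr (small_mono (small_atom hg) (by omega))
  · exact Or.inr (small_AA hg)

theorem small_mem {x : σ →₀ ℕ} {n : ℕ} (h : Small S x n) : x ∈ S := by
  obtain ⟨w, hw, -⟩ := h; rw [← hw]; exact factSum_mem w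

/-- `S*` absorbs everything: the ideal extension property. -/
theorem upF (hS : IsGapAbsorbing S) {s : σ →₀ ℕ} (hs : s ∈ Sstar S) (x : σ →₀ ℕ) :
    s + x ∈ Sstar S := by
  by_cases hx : x ∈ S
  · exact sstar_add hs hx
  · -- x is a gap; strong induction on flen s
    have hgap : x ∈ Gaps S := hx
    clear hx
    obtain ⟨n, hn⟩ : ∃ n, flen s ≤ n := ⟨flen s, le_rfl⟩
    induction n generalizing s with
    | zero =>
      exfalso
      exact hs.2 (flen_eq_zero.mp (Nat.le_zero.mp hn))
    | succ n ih =>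
      by_cases hA : s ∈ Atoms S
      · have := hS.2 (Set.add_mem_add hgap hA)
        have hx : x + s ∈ Sstar S := by
          rcases this with h | h
          · exact h.1
          · rcases Set.mem_add.mp h with ⟨a, ha, b, hb, heq⟩
            rw [← heq]; exact sstar_add ha.1 (atom_mem hb)
        rwa [add_comm]
      · have hss : s ∈ Sstar S + Sstar S := by
          by_contra hc
          exact hA ⟨hs, hc⟩
        rcases Set.mem_add.mp hss with ⟨u, hu, v, hv, heq⟩
        have hu1 : flen u ≤ n := by
          have h1 : flen u + flen v = flen s := by rw [← heq, flen_add]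
          have h2 : flen v ≠ 0 := fun h => hv.2 (flen_eq_zero.mp h)
          omega
        have := ih hu hu1
        have : u + x + v ∈ Sstar S := sstar_add this hv.1
        rw [← heq]
        convert this using 1
        abel

theorem sstar_add_any (hS : IsGapAbsorbing S) {s x : σ →₀ ℕ} (hs : s ∈ Sstar S) :
    s + x ∈ Sstar S := upF hS hs x

/-- a nonzero piece of an atom is an atom or a gap -/
theorem piece_classify (hS : IsGapAbsorbing S) {a x : σ →₀ ℕ} (ha : a ∈ Atoms S)
    (hx : x ≤ a) : x = 0 ∨ x ∈ Gaps S ∨ x ∈ Atoms S := by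
  by_cases h0 : x = 0
  · exact Or.inl h0
  by_cases hxS : x ∈ S
  · refine Or.inr (Or.inr ⟨⟨hxS, h0⟩, ?_⟩)
    intro hc
    rcases Set.mem_add.mp hc with ⟨u, hu, v, hv, heq⟩
    obtain ⟨e, rfl⟩ := exists_add_of_le hx
    have : v + e ∈ Sstar S := upF hS hv e
    exact ha.2 (Set.mem_add.mpr ⟨u, hu, v + e, this, by rw [← heq]; abel⟩)
  · exact Or.inr (Or.inl hxS)

/-- if an atom splits as `x + y` with `x ∈ S*`, `y ≠ 0`, then `x` is an atom and `y` a gap -/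
theorem piece_atom (hS : IsGapAbsorbing S) {a x y : σ →₀ ℕ} (ha : a ∈ Atoms S)
    (heq : a = x + y) (hx : x ∈ Sstar S) (hy : y ≠ 0) : x ∈ Atoms S ∧ y ∈ Gaps S := by
  constructor
  · have hxa : x ≤ a := by rw [heq]; exact self_le_add_right x y
    rcases piece_classify hS ha hxa with h | h | h
    · exact absurd h hx.2
    · exact absurd hx.1 h
    · exact h
  · intro hyS
    have : y ∈ Sstar S := ⟨hyS, hy⟩
    exact ha.2 (Set.mem_add.mpr ⟨x, hx, y, this, heq.symm⟩)

end GA3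

namespace GA4
open GA GA2 GA3
variable {σ : Type*} {S : AddSubmonoid (σ →₀ ℕ)}

/-- If `x + t` is a sum of `flen w` atoms then `t` is `0`, a gap, or has a
factorization of length at most `flen w`. -/
theorem small_cofactor (hS : IsGapAbsorbing S) :
    ∀ (n : ℕ) (w : ↥(Atoms S) →₀ ℕ) (x t : σ →₀ ℕ), flen w ≤ n →
      x + t = factSum S w → t = 0 ∨ t ∈ Gaps S ∨ Small S t (flen w) := by
  intro n
  induction n with
  | zero =>
    intro w x t hn heq
    have hw : w = 0 := flen_eq_zero.mp (Nat.le_zero.mp hn)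
    subst hw
    rw [factSum_zero] at heq
    exact Or.inl (add_eq_zero.mp heq).2
  | succ n ih =>
    intro w x t hn heq
    by_cases hw0 : w = 0
    · subst hw0
      rw [factSum_zero] at heq
      exact Or.inl (add_eq_zero.mp heq).2
    obtain ⟨a, w', hw, hlen⟩ := extract hw0
    have hW : factSum S w = ↑a + factSum S w' := by
      rw [hw, factSum_add, factSum_single_one]
    have ht_le : t ≤ ↑a + factSum S w' := by
      rw [← hW, ← heq]; exact le_add_self
    obtain ⟨τ₁, τ₂, hts, hτ1, hτ2⟩ := riesz ht_le
    -- classify τ₂ by induction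
    have hτ2' : τ₂ = 0 ∨ τ₂ ∈ Gaps S ∨ Small S τ₂ (flen w') := by
      refine ih w' (factSum S w' - τ₂) τ₂ (by omega) ?_
      rw [tsub_add_cancel_of_le hτ2]
    -- classify τ₁ as a piece of the atom a
    have hτ1' : τ₁ = 0 ∨ τ₁ ∈ Gaps S ∨ τ₁ ∈ Atoms S := piece_classify hS a.2 hτ1
    have hw'pos : τ₂ ∈ Gaps S → 1 ≤ flen w' := by
      intro hg
      have : τ₂ ≠ 0 := gaps_ne_zero hg
      have : factSum S w' ≠ 0 := fun h => this (le_antisymm (h ▸ hτ2) zero_le)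
      have : w' ≠ 0 := fun h => this (by rw [h, factSum_zero])
      have := flen_eq_zero.not.mpr this
      omega
    rw [hts]
    rcases hτ1' with h1 | h1 | h1
    · -- τ₁ = 0
      subst h1
      rw [zero_add]
      rcases hτ2' with h2 | h2 | h2
      · exact Or.inl h2
      · exact Or.inr (Or.inl h2)
      · exact Or.inr (Or.inr (small_mono h2 (by omega)))
    · -- τ₁ ∈ Gaps
      rcases hτ2' with h2 | h2 | h2
      · subst h2
        rw [add_zero]
        exact Or.inr (Or.inl h1)
      · have := gap_add_gap hS h1 h2
        rcases this with h | h
        · exact Or.inr (Or.inl h)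
        · have := hw'pos h2
          exact Or.inr (Or.inr (small_mono h (by omega)))
      · by_cases h20 : τ₂ = 0
        · subst h20
          rw [add_zero]
          exact Or.inr (Or.inl h1)
        · obtain ⟨w2, hw2, hl2⟩ := h2
          have hw20 : w2 ≠ 0 := fun h => h20 (by rw [← hw2, h, factSum_zero])
          obtain ⟨c, w2', hc, hcl⟩ := extract hw20
          have : τ₁ + τ₂ = (τ₁ + ↑c) + factSum S w2' := by
            rw [← hw2, hc, factSum_add, factSum_single_one]; abel
          rw [this]
          refine Or.inr (Or.inr (small_mono
            (small_add (small_gapAtom hS h1 c.2) ⟨w2', rfl, le_rfl⟩) ?_))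
          omega
    · -- τ₁ ∈ Atoms
      rcases hτ2' with h2 | h2 | h2
      · subst h2
        rw [add_zero]
        exact Or.inr (Or.inr (small_mono (small_atom h1) (by omega)))
      · have := hw'pos h2
        rw [add_comm]
        exact Or.inr (Or.inr (small_mono (small_gapAtom hS h2 h1) (by omega)))
      · exact Or.inr (Or.inr (small_mono (small_add (small_atom h1) h2) (by omega)))

end GA4

namespace GA5
open GA GA2 GA3 GA4
variable {σ : Type*} {S : AddSubmonoid (σ →₀ ℕ)}

/-- A 4-chain between two factorizations (of the same element). -/
def Chain (S : AddSubmonoid (σ →₀ ℕ)) (u v : ↥(Atoms S) →₀ ℕ) : Prop :=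
  ∃ (n : ℕ) (f : ℕ → (↥(Atoms S) →₀ ℕ)),
    f 0 = u ∧ f n = v ∧ (∀ i ≤ n, factSum S (f i) = factSum S u) ∧
    ∀ i < n, fdist (f i) (f (i + 1)) ≤ 4

theorem chain_refl (u : ↥(Atoms S) →₀ ℕ) : Chain S u u :=
  ⟨0, fun _ => u, rfl, rfl, fun _ _ => rfl, fun i h => absurd h (by omega)⟩

theorem chain_sum {u v : ↥(Atoms S) →₀ ℕ} (h : Chain S u v) :
    factSum S u = factSum S v := by
  obtain ⟨n, f, h0, hn, hsum, -⟩ := h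
  rw [← h0, ← hn, h0]
  exact (hsum n le_rfl).symm

theorem chain_step {u v : ↥(Atoms S) →₀ ℕ} (hsum : factSum S u = factSum S v)
    (hd : fdist u v ≤ 4) : Chain S u v := by
  refine ⟨1, fun i => if i = 0 then u else v, by simp, by simp, ?_, ?_⟩
  · intro i hi
    by_cases h : i = 0 <;> simp [h, hsum.symm]
  · intro i hi
    have : i = 0 := by omega
    simpa [this] using hd

theorem chain_trans {u v w : ↥(Atoms S) →₀ ℕ} (h1 : Chain S u v) (h2 : Chain S v w) :
    Chain S u w := by
  obtain ⟨n₁, f, hf0, hfn, hfs, hfd⟩ := h1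
  obtain ⟨n₂, g, hg0, hgn, hgs, hgd⟩ := h2
  refine ⟨n₁ + n₂, fun i => if i ≤ n₁ then f i else g (i - n₁), by simp [hf0], ?_, ?_, ?_⟩
  · by_cases h : n₂ = 0
    · subst h
      simpa using hfn.trans (hg0.symm.trans (by rw [hgn]))
    · have : ¬ (n₁ + n₂ ≤ n₁) := by omega
      simp only [this, if_false]
      rw [Nat.add_sub_cancel_left, hgn]
  · intro i hi
    by_cases h : i ≤ n₁
    · simp only [h, if_true]; exact hfs i h
    · simp only [h, if_false]
      rw [hgs (i - n₁) (by omega), ← hfn]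
      exact hfs n₁ le_rfl
  · intro i hi
    by_cases h : i + 1 ≤ n₁
    · have h' : i ≤ n₁ := by omega
      simp only [h, h', if_true]
      exact hfd i (by omega)
    · by_cases h' : i ≤ n₁
      · -- i = n₁
        have hin : i = n₁ := by omega
        subst hin
        have : ¬ (i + 1 ≤ i) := by omega
        simp only [h', this, if_true, if_false]
        rw [Nat.add_sub_cancel_left, hfn, ← hg0]
        exact hgd 0 (by omega)
      · simp only [h, h', if_false]
        have e1 : i - n₁ + 1 = i + 1 - n₁ := by omega
        rw [← e1]
        exact hgd (i - n₁) (by omega)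

theorem chain_add_right {u v : ↥(Atoms S) →₀ ℕ} (w : ↥(Atoms S) →₀ ℕ)
    (h : Chain S u v) : Chain S (u + w) (v + w) := by
  obtain ⟨n, f, hf0, hfn, hfs, hfd⟩ := h
  refine ⟨n, fun i => f i + w, by simp only [hf0], by simp only [hfn], ?_, ?_⟩
  · intro i hi
    rw [factSum_add, factSum_add, hfs i hi]
  · intro i hi
    rw [fdist_add_right]
    exact hfd i hi

/-- The basic swap move: replace a subfactorization `y` of `z = y + r` by
another factorization `w` of the same element, where both pieces have length at
most 4. -/
theorem chain_swap {y w r : ↥(Atoms S) →₀ ℕ} (hsum : factSum S y = factSum S w)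
    (hy : flen y ≤ 4) (hw : flen w ≤ 4) : Chain S (y + r) (w + r) := by
  refine chain_step ?_ ?_
  · rw [factSum_add, factSum_add, hsum]
  · exact (fdist_swap_le y w r).trans (by omega)

end GA5

namespace GA6
open GA GA2 GA3 GA4 GA5
variable {σ : Type*} {S : AddSubmonoid (σ →₀ ℕ)}

/-- `b` is covered by a subfactorization of `z` of length at most `k`. -/
def Cover (S : AddSubmonoid (σ →₀ ℕ)) (z : ↥(Atoms S) →₀ ℕ) (b : σ →₀ ℕ) (k : ℕ) : Prop :=
  ∃ y, y ≤ z ∧ flen y ≤ k ∧ b ≤ factSum S y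

theorem single_b_pos {b : σ →₀ ℕ} (hb : b ∈ Atoms S) (w r : ↥(Atoms S) →₀ ℕ) :
    1 ≤ ((Finsupp.single (⟨b, hb⟩ : ↥(Atoms S)) 1 + w + r : ↥(Atoms S) →₀ ℕ)) ⟨b, hb⟩ := by
  rw [Finsupp.add_apply, Finsupp.add_apply, Finsupp.single_eq_same]
  omega

theorem factSum_single_mk {b : σ →₀ ℕ} (hb : b ∈ Atoms S) :
    factSum S (Finsupp.single (⟨b, hb⟩ : ↥(Atoms S)) 1) = b := factSum_single_one _

theorem key_direct (hS : IsGapAbsorbing S) {b q : σ →₀ ℕ} (hb : b ∈ Atoms S) (hq : q ∈ S)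
    {z : ↥(Atoms S) →₀ ℕ} (hz : factSum S z = b + q) (hc : Cover S z b 3) :
    ∃ z'', Chain S z z'' ∧ 1 ≤ z'' ⟨b, hb⟩ := by
  obtain ⟨y, hyz, hyl, hby⟩ := hc
  obtain ⟨t, hbt⟩ := exists_add_of_le hby
  have hzd : z = y + (z - y) := (add_tsub_cancel_of_le hyz).symm
  rcases small_cofactor hS (flen y) y b t le_rfl hbt.symm with ht0 | htg | hts
  · -- t = 0 : direct swap to b
    subst ht0
    rw [add_zero] at hbt
    refine ⟨(Finsupp.single ⟨b, hb⟩ 1 + 0) + (z - y), ?_, single_b_pos hb 0 _⟩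
    have hch : Chain S (y + (z - y)) ((Finsupp.single ⟨b, hb⟩ 1 + 0) + (z - y)) :=
      chain_swap (by rw [factSum_add, factSum_single_mk hb, factSum_zero, ← hbt, add_zero])
        (by omega) (by rw [flen_add, flen_single, flen_eq_zero.mpr rfl]; omega)
    rwa [← hzd] at hch
  · -- t is a gap : absorb it into an extra atom of z outside y
    by_cases hyez : y = z
    · exfalso
      rw [hyez, hz] at hbt
      have : q = t := add_left_cancel hbt
      exact htg (this ▸ hq)
    · have hr0 : z - y ≠ 0 := by
        intro h
        exact hyez (le_antisymm hyz (by rw [hzd, h, add_zero]))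
      obtain ⟨a, r', hr, -⟩ := extract hr0
      obtain ⟨w, hwsum, hwlen⟩ := small_gapAtom hS htg a.2
      refine ⟨(Finsupp.single ⟨b, hb⟩ 1 + w) + r', ?_, single_b_pos hb w r'⟩
      have hzd2 : z = (y + Finsupp.single a 1) + r' := by
        rw [hzd, hr]; abel
      have hch : Chain S ((y + Finsupp.single a 1) + r') ((Finsupp.single ⟨b, hb⟩ 1 + w) + r') :=
        chain_swap
          (by rw [factSum_add, factSum_add, factSum_single_one, factSum_single_mk hb, hwsum, hbt]
              abel)
          (by rw [flen_add, flen_single]; omega) (by rw [flen_add, flen_single]; omega)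
      rwa [← hzd2] at hch
  · -- t has a short factorization
    obtain ⟨w, hwsum, hwlen⟩ := hts
    refine ⟨(Finsupp.single ⟨b, hb⟩ 1 + w) + (z - y), ?_, single_b_pos hb w _⟩
    have hch : Chain S (y + (z - y)) ((Finsupp.single ⟨b, hb⟩ 1 + w) + (z - y)) :=
      chain_swap (by rw [factSum_add, factSum_single_mk hb, hwsum, ← hbt]) (by omega)
        (by rw [flen_add, flen_single]; omega)
    rwa [← hzd] at hch

end GA6

namespace GA7
open GA GA2 GA3 GA4 GA5 GA6
variable {σ : Type*} {S : AddSubmonoid (σ →₀ ℕ)}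

theorem key (hS : IsGapAbsorbing S) {b q : σ →₀ ℕ} (hb : b ∈ Atoms S) (hq : q ∈ S) :
    ∀ (k : ℕ) (z : ↥(Atoms S) →₀ ℕ), factSum S z = b + q → Cover S z b k →
      ∃ z'', Chain S z z'' ∧ 1 ≤ z'' ⟨b, hb⟩ := by
  intro k
  induction k using Nat.strong_induction_on with
  | _ k ih =>
  intro z hz hc
  by_cases h3 : Cover S z b 3
  · exact key_direct hS hb hq hz h3
  obtain ⟨y, hyz, hyl, hby⟩ := hc
  have hy4 : 4 ≤ flen y := by
    by_contra h
    exact h3 ⟨y, hyz, by omega, hby⟩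
  have hk4 : 4 ≤ k := by omega
  by_cases hk1 : Cover S z b (k - 1)
  · exact ih (k - 1) (by omega) z hz hk1
  -- main reduction step
  have hflyk : flen y = k := by
    by_contra h
    exact hk1 ⟨y, hyz, by omega, hby⟩
  -- extract three atoms from y
  obtain ⟨a₁, y₁, hy1, hl1⟩ := extract (fun h => by rw [h] at hy4; simp [flen] at hy4 : y ≠ 0)
  have hy10 : y₁ ≠ 0 := fun h => by rw [h, flen_eq_zero.mpr rfl] at hl1; omega
  obtain ⟨a₂, y₂, hy2, hl2⟩ := extract hy10
  have hy20 : y₂ ≠ 0 := fun h => by rw [h, flen_eq_zero.mpr rfl] at hl2; omega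
  obtain ⟨a₃, y₄, hy3, hl3⟩ := extract hy20
  set y₃ : ↥(Atoms S) →₀ ℕ :=
    Finsupp.single a₁ 1 + Finsupp.single a₂ 1 + Finsupp.single a₃ 1 with hy₃def
  have hydecomp : y = y₃ + y₄ := by rw [hy1, hy2, hy3, hy₃def]; abel
  have hy₃z : y₃ ≤ z := (self_le_add_right y₃ y₄).trans (hydecomp ▸ hyz)
  have hy₄r : y₄ ≤ z - y₃ := le_tsub_of_add_le_left (hydecomp ▸ hyz)
  have hzd : z = y₃ + (z - y₃) := (add_tsub_cancel_of_le hy₃z).symm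
  have hY₃ : factSum S y₃ = ↑a₁ + ↑a₂ + ↑a₃ := by
    rw [hy₃def, factSum_add, factSum_add, factSum_single_one, factSum_single_one,
      factSum_single_one]
  have hfl3 : flen y₃ = 3 := by
    rw [hy₃def, flen_add, flen_add, flen_single, flen_single, flen_single]
  have hfl4 : flen y₄ = k - 3 := by omega
  have hby' : b ≤ factSum S y₃ + factSum S y₄ := by
    rw [← factSum_add, ← hydecomp]; exact hby
  obtain ⟨γ, ρ, hbγρ, hγle, hρle⟩ := riesz hby'
  have hγ0 : γ ≠ 0 := by
    intro h
    rw [h, zero_add] at hbγρ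
    refine hk1 ⟨y₄, (le_add_self).trans (hydecomp ▸ hyz), by omega, hbγρ ▸ hρle⟩
  have hρ0 : ρ ≠ 0 := by
    intro h
    rw [h, add_zero] at hbγρ
    exact h3 ⟨y₃, hy₃z, by omega, hbγρ ▸ hγle⟩
  obtain ⟨δ, hγδ⟩ := exists_add_of_le hγle
  have hδclass : δ = 0 ∨ δ ∈ Gaps S ∨ Small S δ 3 := by
    rcases small_cofactor hS 3 y₃ γ δ (by omega) hγδ.symm with h | h | h
    · exact Or.inl h
    · exact Or.inr (Or.inl h)
    · exact Or.inr (Or.inr (small_mono h (by omega)))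
  have hδ0S : δ = 0 → False := by
    intro h
    rw [h, add_zero] at hγδ
    -- then γ = factSum y₃ ∈ S and γ < b makes b non-atomic; also if γ ∉ S direct contra
    by_cases hγS : γ ∈ S
    · -- γ ∈ S*, piece of atom b, so γ is an atom; but γ = Y₃ ∈ S* + S*
      have hγA : γ ∈ Atoms S := (piece_atom hS hb hbγρ ⟨hγS, hγ0⟩ hρ0).1
      refine hγA.2 (Set.mem_add.mpr ⟨↑a₁, a₁.2.1, ↑a₂ + ↑a₃,
        sstar_add a₂.2.1 (atom_mem a₃.2), ?_⟩)
      rw [← hγδ, hY₃]; abel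
    · exact hγS (hγδ ▸ factSum_mem y₃)
  -- produce the new local factorization and the smaller cover
  obtain ⟨w, c, P1, P2, P3, P4, P5⟩ : ∃ w c, factSum S w = factSum S y₃ ∧ flen w ≤ 4 ∧
      c ≤ w + (z - y₃) ∧ flen c ≤ k - 1 ∧ b ≤ factSum S c := by
    by_cases hγS : γ ∈ S
    · have hγA : γ ∈ Atoms S := (piece_atom hS hb hbγρ ⟨hγS, hγ0⟩ hρ0).1
      rcases hδclass with hδ0 | hδG | hδS
      · exact absurd hδ0 hδ0S
      · -- γ atom, δ gap
        obtain ⟨w, hwsum, hwlen⟩ := small_gapAtom hS hδG hγA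
        refine ⟨w, w + y₄, ?_, by omega, add_le_add_right hy₄r w, ?_, ?_⟩
        · rw [hwsum, add_comm, ← hγδ]
        · rw [flen_add]; omega
        · rw [hbγρ, factSum_add, hwsum]
          exact add_le_add le_add_self hρle
      · -- γ atom, δ small
        obtain ⟨wδ, hwδsum, hwδlen⟩ := hδS
        refine ⟨Finsupp.single ⟨γ, hγA⟩ 1 + wδ, Finsupp.single ⟨γ, hγA⟩ 1 + y₄, ?_, ?_, ?_, ?_, ?_⟩
        · rw [factSum_add, factSum_single_mk hγA, hwδsum, ← hγδ]
        · rw [flen_add, flen_single]; omega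
        · rw [add_assoc]
          exact add_le_add_right (hy₄r.trans le_add_self) _
        · rw [flen_add, flen_single]; omega
        · rw [hbγρ, factSum_add, factSum_single_mk hγA]
          exact add_le_add le_rfl hρle
    · have hγG : γ ∈ Gaps S := hγS
      rcases hδclass with hδ0 | hδG | hδS
      · exact absurd hδ0 hδ0S
      · -- both gaps
        obtain ⟨w, hwsum, hwlen⟩ : Small S (γ + δ) 2 := by
          rcases gap_add_gap hS hγG hδG with h | h
          · exact absurd (hγδ ▸ factSum_mem y₃) h
          · exact h
        refine ⟨w, w + y₄, ?_, by omega, add_le_add_right hy₄r w, ?_, ?_⟩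
        · rw [hwsum, ← hγδ]
        · rw [flen_add]; omega
        · rw [hbγρ, factSum_add, hwsum]
          exact add_le_add (self_le_add_right γ δ) hρle
      · -- γ gap, δ small : absorb γ into an atom of the factorization of δ
        obtain ⟨wδ, hwδsum, hwδlen⟩ := hδS
        have hwδ0 : wδ ≠ 0 := by
          intro h
          rw [h, factSum_zero] at hwδsum
          exact hδ0S hwδsum.symm
        obtain ⟨cδ, wδ', hwδd, hwδl⟩ := extract hwδ0
        obtain ⟨wγc, hγcsum, hγclen⟩ := small_gapAtom hS hγG cδ.2
        have hcδ : ↑cδ + factSum S wδ' = δ := by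
          rw [← hwδsum, hwδd, factSum_add, factSum_single_one]
        refine ⟨wγc + wδ', wγc + y₄, ?_, ?_, ?_, ?_, ?_⟩
        · rw [factSum_add, hγcsum, add_assoc, hcδ, ← hγδ]
        · rw [flen_add]; omega
        · rw [add_assoc]
          exact add_le_add_right (hy₄r.trans le_add_self) _
        · rw [flen_add]; omega
        · rw [hbγρ, factSum_add, hγcsum]
          exact add_le_add (self_le_add_right γ _) hρle
  have hch : Chain S (y₃ + (z - y₃)) (w + (z - y₃)) :=
    chain_swap P1.symm (by omega) P2
  rw [← hzd] at hch
  have hz₂ : factSum S (w + (z - y₃)) = b + q := by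
    rw [← chain_sum hch, hz]
  obtain ⟨z'', hch2, hcb⟩ := ih (k - 1) (by omega) (w + (z - y₃)) hz₂ ⟨c, P3, P4, P5⟩
  exact ⟨z'', chain_trans hch hch2, hcb⟩

end GA7

namespace GA8
open GA GA2 GA3 GA4 GA5 GA6 GA7
variable {σ : Type*} {S : AddSubmonoid (σ →₀ ℕ)}

theorem main (hS : IsGapAbsorbing S) :
    ∀ (n : ℕ) (u v : ↥(Atoms S) →₀ ℕ), flen v ≤ n → factSum S u = factSum S v →
      Chain S u v := by
  intro n
  induction n with
  | zero =>
    intro u v hv hsum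
    have hv0 : v = 0 := flen_eq_zero.mp (Nat.le_zero.mp hv)
    subst hv0
    rw [factSum_zero] at hsum
    rw [factSum_eq_zero hsum]
    exact chain_refl 0
  | succ n ih =>
    intro u v hv hsum
    by_cases hv0 : v = 0
    · subst hv0
      rw [factSum_zero] at hsum
      rw [factSum_eq_zero hsum]
      exact chain_refl 0
    obtain ⟨bb, v₀, hvd, hvl⟩ := extract hv0
    have hz : factSum S u = ↑bb + factSum S v₀ := by
      rw [hsum, hvd, factSum_add, factSum_single_one]
    obtain ⟨z'', hch, hcb⟩ := key hS bb.2 (factSum_mem v₀) (flen u) u hz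
      ⟨u, le_rfl, le_rfl, by rw [hz]; exact self_le_add_right _ _⟩
    have hcb' : 1 ≤ z'' bb := hcb
    have hsingle_le : Finsupp.single bb 1 ≤ z'' := Finsupp.single_le_iff.mpr hcb'
    have hzdd : z'' = Finsupp.single bb 1 + (z'' - Finsupp.single bb 1) :=
      (add_tsub_cancel_of_le hsingle_le).symm
    have hsum₀ : factSum S (z'' - Finsupp.single bb 1) = factSum S v₀ := by
      have h1 : factSum S z'' = factSum S u := (chain_sum hch).symm
      rw [hzdd] at h1
      rw [factSum_add, factSum_single_one, hz] at h1
      exact add_left_cancel h1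
    have hch₀ : Chain S (z'' - Finsupp.single bb 1) v₀ := ih _ v₀ (by omega) hsum₀
    have hch₁ : Chain S z'' v := by
      have h2 := chain_add_right (Finsupp.single bb 1) hch₀
      rw [hzdd, hvd, add_comm (Finsupp.single bb 1) (z'' - Finsupp.single bb 1),
        add_comm (Finsupp.single bb 1) v₀]
      exact h2
    exact chain_trans hch hch₁

end GA8


theorem statement13 (I : Set ℕ) (hI : I.Nonempty) (S : AddSubmonoid (↥I →₀ ℕ))
    (hS : IsGapAbsorbing S) :
    ∀ s ∈ S, ∀ u ∈ Zset S s, ∀ v ∈ Zset S s,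
      ∃ (n : ℕ) (f : ℕ → (↥(Atoms S) →₀ ℕ)),
        f 0 = u ∧ f n = v ∧ (∀ i ≤ n, f i ∈ Zset S s) ∧
        ∀ i < n, fdist (f i) (f (i + 1)) ≤ 4 := by
  intro s hs u hu v hv
  have hu' : factSum S u = s := hu
  have hv' : factSum S v = s := hv
  obtain ⟨n, f, h0, hn, hsum, hd⟩ := GA8.main hS (flen v) u v le_rfl (hu'.trans hv'.symm)
  exact ⟨n, f, h0, hn, fun i hi => (hsum i hi).trans hu', hd⟩
end Distance
end

section
/- Let I be a nonempty set of non-negative integers and let S be a submonoid of ℕ^(I) such that for every positive integer n, the set nA(S) \ (n−1)A(S) is closed under intervals. Then for every s ∈ S, the set of lengths L(s) is an interval of integers (equivalently, max Δ(S) ≤ 1). -/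
open Pointwise

section Aux

variable {M : Type*} [AddCommMonoid M] [PartialOrder M]

lemma nfold_add' (p q : ℕ) (X : Set M) :
    nfold (p + q) X = nfold p X + nfold q X := by
  induction q with
  | zero => show nfold p X = nfold p X + {0}
            rw [Set.singleton_zero, add_zero]
  | succ q ih =>
      show nfold (p + q) X + X = nfold p X + (nfold q X + X)
      rw [ih, add_assoc]

lemma mono_minLen (S : AddSubmonoid M)
    (hzero : ∀ x : M, x ≤ 0 → x = 0) (hadd : ∀ a b : M, a ≤ a + b)
    (hS : ∀ n : ℕ, ClosedUnderIntervals
      (nfold (n + 1) (Atoms S) \ nfold n (Atoms S)))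
    {x y : M} (hxy : x ≤ y) {p q : ℕ}
    (hx : x ∈ nfold p (Atoms S)) (hy : y ∈ nfold q (Atoms S)) :
    minLen S x ≤ minLen S y := by
  by_contra hlt
  push_neg at hlt
  set P := minLen S x with hP
  set Q := minLen S y with hQ
  have hPmem : P ∈ Lset S x := Nat.sInf_mem ⟨p, hx⟩
  have hQmem : Q ∈ Lset S y := Nat.sInf_mem ⟨q, hy⟩
  rw [Lset, Set.mem_setOf_eq] at hPmem hQmem
  rcases Nat.eq_zero_or_pos Q with hQ0 | hQpos
  · -- y = 0, so x = 0, so P = 0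
    rw [hQ0] at hQmem
    have hy0 : y = 0 := hQmem
    have hx0 : x = 0 := hzero x (hy0 ▸ hxy)
    have : P ≤ 0 := Nat.sInf_le (by show x ∈ nfold 0 (Atoms S); rw [hx0]; rfl)
    omega
  · obtain ⟨Q', hQe⟩ : ∃ Q'', Q = Q'' + 1 := ⟨Q - 1, by omega⟩
    rw [hQe] at hQmem
    -- decompose x into Q + (P - Q) atoms
    have hPQ : P = (Q' + 1) + (P - (Q' + 1)) := by omega
    rw [hPQ, nfold_add'] at hPmem
    rcases Set.mem_add.mp hPmem with ⟨u, hu, v, hv, huv⟩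
    have hLu : (Lset S u).Nonempty := ⟨Q' + 1, hu⟩
    have hr : minLen S u ≤ Q' + 1 := Nat.sInf_le hu
    rcases lt_or_eq_of_le hr with hrlt | hreq
    · -- shorter factorization of x
      have humem : u ∈ nfold (minLen S u) (Atoms S) := Nat.sInf_mem hLu
      have : x ∈ nfold (minLen S u + (P - (Q' + 1))) (Atoms S) := by
        rw [nfold_add']
        exact huv ▸ Set.add_mem_add humem hv
      have : P ≤ minLen S u + (P - (Q' + 1)) := Nat.sInf_le this
      omega
    · -- u and y are in the same layer; x is in between
      have eu : minLen S u = sInf (Lset S u) := rfl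
      have ey : minLen S y = sInf (Lset S y) := rfl
      have hu' : u ∉ nfold Q' (Atoms S) := by
        intro h
        exact Nat.notMem_of_lt_sInf (by omega : Q' < sInf (Lset S u)) h
      have hy' : y ∉ nfold Q' (Atoms S) := by
        intro h
        exact Nat.notMem_of_lt_sInf (by omega : Q' < sInf (Lset S y)) h
      have hux : u ≤ x := huv ▸ hadd u v
      have hxIcc : x ∈ Set.Icc u y := ⟨hux, hxy⟩
      have := hS Q' u ⟨hu, hu'⟩ y ⟨hQmem, hy'⟩ (le_trans hux hxy) hxIcc
      have : P ≤ Q' + 1 := Nat.sInf_le this.1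
      omega

lemma lemB (S : AddSubmonoid M)
    (hzero : ∀ x : M, x ≤ 0 → x = 0) (hadd : ∀ a b : M, a ≤ a + b)
    (hS : ∀ n : ℕ, ClosedUnderIntervals
      (nfold (n + 1) (Atoms S) \ nfold n (Atoms S))) :
    ∀ l' (s : M), s ∈ nfold l' (Atoms S) → ∀ m, minLen S s ≤ m → m ≤ l' →
      s ∈ nfold m (Atoms S) := by
  intro l'
  induction l' with
  | zero =>
      intro s hs m _ hm
      interval_cases m
      exact hs
  | succ l ih =>
      intro s hs m hms hml
      rcases Nat.eq_or_lt_of_le hml with rfl | hml'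
      · exact hs
      · have hml : m ≤ l := by omega
        rcases Set.mem_add.mp hs with ⟨u, hu, a, ha, hua⟩
        have hmu : minLen S u ≤ minLen S s :=
          mono_minLen S hzero hadd hS (hua ▸ hadd u a) hu hs
        rcases Nat.eq_or_lt_of_le hms with heq | hlt
        · -- minLen s = m : s is in the m-layer directly
          have : minLen S s ∈ Lset S s := Nat.sInf_mem ⟨l + 1, hs⟩
          rw [Lset, Set.mem_setOf_eq, heq] at this
          exact this
        · -- minLen s < m, so minLen u ≤ m - 1
          obtain ⟨m', rfl⟩ : ∃ m'', m = m'' + 1 := ⟨m - 1, by omega⟩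
          have hum' : u ∈ nfold m' (Atoms S) := ih u hu m' (by omega) (by omega)
          exact hua ▸ Set.add_mem_add hum' ha

end Aux

theorem statement15 (I : Set ℕ) (hI : I.Nonempty) (S : AddSubmonoid (↥I →₀ ℕ))
    (hS : ∀ n : ℕ, ClosedUnderIntervals
      (nfold (n + 1) (Atoms S) \ nfold n (Atoms S))) :
    ∀ s ∈ S, ∀ l ∈ Lset S s, ∀ l' ∈ Lset S s, ∀ m : ℕ,
      l ≤ m → m ≤ l' → m ∈ Lset S s := by
  intro s _ l hl l' hl' m hlm hml'
  have hzero : ∀ x : ↥I →₀ ℕ, x ≤ 0 → x = 0 := by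
    intro x hx
    ext i
    exact Nat.le_zero.mp (Finsupp.le_def.mp hx i)
  have hadd : ∀ a b : ↥I →₀ ℕ, a ≤ a + b := by
    intro a b
    rw [Finsupp.le_def]
    intro i
    simp
  have hms : minLen S s ≤ m := le_trans (Nat.sInf_le hl) hlm
  exact lemB S hzero hadd hS l' s hl' m hms hml'
end

section
/- Let I be a nonempty set of non-negative integers and let S be an ideal extension of ℕ^(I). Then for every atom a ∈ A(S), the ω-primality satisfies ω(a) ≤ ‖a‖₁ + 1. In particular, ω(S) ≤ 1 + sup{‖a‖₁ : a ∈ A(S)}. -/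
open Pointwise

/-- The 1-norm `‖a‖₁ = Σ_i a i`. -/
def norm1 {α : Type*} (a : α →₀ ℕ) : ℕ := a.sum fun _ n => n

section Omega

variable {M : Type*} [AddCommMonoid M] [PartialOrder M]

/-- `N` is an ω-bound for `s`: whenever `s ≤_S s_1 + ⋯ + s_n` with all `s_i ∈ S`,
already `s ≤_S Σ_{j ∈ J} s_j` for some `J` with `|J| ≤ N`. -/
def omegaBound (S : AddSubmonoid M) (s : M) (N : ℕ) : Prop :=
  ∀ (n : ℕ) (f : Fin n → M), (∀ i, f i ∈ S) → dvdS S s (∑ i, f i) →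
    ∃ J : Finset (Fin n), J.card ≤ N ∧ dvdS S s (∑ i ∈ J, f i)

/-- The ω-primality `ω(s) ∈ ℕ ∪ {∞}` of `s`. -/
noncomputable def omegaVal (S : AddSubmonoid M) (s : M) : ℕ∞ :=
  sInf {N : ℕ∞ | ∃ k : ℕ, N = (k : ℕ∞) ∧ omegaBound S s k}

/-- The ω-primality of the monoid: `ω(S) = sup {ω(a) : a ∈ A(S)}`. -/
noncomputable def omegaMonoid (S : AddSubmonoid M) : ℕ∞ :=
  ⨆ a ∈ Atoms S, omegaVal S a

end Omega

section Aux

lemma cover_lemma {ι : Type*} [DecidableEq ι] (g : ι → ℕ) :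
    ∀ (m : ℕ) (U : Finset ι), m ≤ ∑ i ∈ U, g i →
      ∃ T ⊆ U, T.card ≤ m ∧ m ≤ ∑ i ∈ T, g i := by
  intro m
  induction m using Nat.strong_induction_on with
  | _ m IH =>
    intro U hU
    rcases Nat.eq_zero_or_pos m with hm | hm
    · exact ⟨∅, Finset.empty_subset _, by simp [hm], by simp [hm]⟩
    · have hpos : 0 < ∑ i ∈ U, g i := lt_of_lt_of_le hm hU
      obtain ⟨i, hiU, hgi⟩ : ∃ i ∈ U, g i ≠ 0 := by
        by_contra h
        push_neg at h
        have : ∑ i ∈ U, g i = 0 := Finset.sum_eq_zero h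
        omega
      by_cases hmi : m ≤ g i
      · exact ⟨{i}, Finset.singleton_subset_iff.mpr hiU, by simpa using Nat.succ_le_of_lt hm, by simpa using hmi⟩
      · have hlt : m - g i < m := by omega
        have hsum : ∑ j ∈ U, g j = g i + ∑ j ∈ U.erase i, g j :=
          (Finset.add_sum_erase U g hiU).symm
        have hle : m - g i ≤ ∑ j ∈ U.erase i, g j := by omega
        obtain ⟨T', hT'sub, hT'card, hT'sum⟩ := IH (m - g i) hlt (U.erase i) hle
        have hiT' : i ∉ T' := fun h => (Finset.mem_erase.mp (hT'sub h)).1 rfl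
        refine ⟨insert i T', ?_, ?_, ?_⟩
        · exact Finset.insert_subset hiU (hT'sub.trans (Finset.erase_subset _ _))
        · rw [Finset.card_insert_of_notMem hiT']
          omega
        · rw [Finset.sum_insert hiT']
          omega

variable {I : Set ℕ}

lemma key_bound (S : AddSubmonoid (↥I →₀ ℕ)) (hS : IsIdealExtension S)
    (a : ↥I →₀ ℕ) (ha : a ∈ Sstar S) : omegaBound S a (norm1 a + 1) := by
  intro n f hf hdvd
  classical
  obtain ⟨t, htS, hat⟩ := hdvd
  -- a ≤ ∑ f i pointwise
  have hale : a ≤ ∑ i, f i := by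
    rw [← hat]; exact le_add_of_nonneg_right zero_le
  -- for each coordinate c in support of a, pick a covering set
  have hcov : ∀ c ∈ a.support, ∃ T : Finset (Fin n), T.card ≤ a c ∧
      a c ≤ ∑ j ∈ T, f j c := by
    intro c _
    have : a c ≤ ∑ j : Fin n, f j c := by
      have := hale c
      rwa [Finsupp.finset_sum_apply] at this
    obtain ⟨T, _, hTc, hTs⟩ := cover_lemma (fun j => f j c) (a c) Finset.univ this
    exact ⟨T, hTc, hTs⟩
  choose T hTcard hTsum using hcov
  set J₀ : Finset (Fin n) := a.support.attach.biUnion (fun c => T c.1 c.2) with hJ₀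
  have hJ₀card : J₀.card ≤ norm1 a := by
    calc J₀.card ≤ ∑ c ∈ a.support.attach, (T c.1 c.2).card := Finset.card_biUnion_le
    _ ≤ ∑ c ∈ a.support.attach, a c.1 := Finset.sum_le_sum (fun c _ => hTcard c.1 c.2)
    _ = ∑ c ∈ a.support, a c := Finset.sum_attach _ _
    _ = norm1 a := rfl
  have hJ₀le : a ≤ ∑ j ∈ J₀, f j := by
    intro c
    rw [Finsupp.finset_sum_apply]
    by_cases hc : c ∈ a.support
    · calc a c ≤ ∑ j ∈ T c hc, f j c := hTsum c hc
      _ ≤ ∑ j ∈ J₀, f j c := Finset.sum_le_sum_of_subset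
          (fun j hj => Finset.mem_biUnion.mpr ⟨⟨c, hc⟩, Finset.mem_attach _ _, hj⟩)
    · simp [Finsupp.notMem_support_iff.mp hc]
  by_cases hext : ∃ j, j ∉ J₀ ∧ f j ≠ 0
  · obtain ⟨j₀, hj₀, hfj₀⟩ := hext
    refine ⟨insert j₀ J₀, ?_, ?_⟩
    · rw [Finset.card_insert_of_notMem hj₀]; omega
    · refine ⟨(∑ j ∈ J₀, f j - a) + f j₀, ?_, ?_⟩
      · have := hS (f j₀) ⟨hf j₀, hfj₀⟩ (∑ j ∈ J₀, f j - a)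
        rw [add_comm] at this
        exact this.1
      · rw [← add_assoc, add_tsub_cancel_of_le hJ₀le, Finset.sum_insert hj₀, add_comm]
  · push_neg at hext
    refine ⟨J₀, by omega, t, htS, ?_⟩
    rw [hat]
    exact (Finset.sum_subset (Finset.subset_univ J₀) (fun j _ hj => hext j hj)).symm

end Aux

theorem statement16 (I : Set ℕ) (hI : I.Nonempty) (S : AddSubmonoid (↥I →₀ ℕ))
    (hS : IsIdealExtension S) :
    (∀ a ∈ Atoms S, omegaVal S a ≤ (norm1 a : ℕ∞) + 1) ∧
    omegaMonoid S ≤ 1 + ⨆ a ∈ Atoms S, (norm1 a : ℕ∞) := by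
  have hval : ∀ a ∈ Atoms S, omegaVal S a ≤ (norm1 a : ℕ∞) + 1 := by
    intro a ha
    have hb : omegaBound S a (norm1 a + 1) := key_bound S hS a ha.1
    have : ((norm1 a + 1 : ℕ) : ℕ∞) ∈
        {N : ℕ∞ | ∃ k : ℕ, N = (k : ℕ∞) ∧ omegaBound S a k} := ⟨norm1 a + 1, rfl, hb⟩
    calc omegaVal S a ≤ ((norm1 a + 1 : ℕ) : ℕ∞) := sInf_le this
      _ = (norm1 a : ℕ∞) + 1 := by push_cast; ring
  refine ⟨hval, ?_⟩
  refine iSup₂_le fun a ha => ?_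
  calc omegaVal S a ≤ (norm1 a : ℕ∞) + 1 := hval a ha
    _ = 1 + (norm1 a : ℕ∞) := by rw [add_comm]
    _ ≤ 1 + ⨆ a ∈ Atoms S, (norm1 a : ℕ∞) :=
        add_le_add le_rfl (le_iSup₂ (f := fun a _ => (norm1 a : ℕ∞)) a ha)
end

section
/- Let I be a nonempty set of non-negative integers and let S be an ideal extension of ℕ^(I). Let a, b ∈ A(S) with a ≤ b. Then ω(a) ≤ ω(b). -/
open Pointwise

section Proof17

variable {ι : Type*}

lemma fs_app {x y : ι →₀ ℕ} (h : x = y) (i : ι) : x i = y i := by rw [h]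

lemma fs_cancel_right {x y z : ι →₀ ℕ} (h : x + z = y + z) : x = y := by
  ext i
  have := fs_app h i
  simp only [Finsupp.add_apply] at this
  omega

lemma atoms_sum_eq (S : AddSubmonoid (ι →₀ ℕ)) {b : ι →₀ ℕ}
    (hb : b ∈ Atoms S) {n : ℕ} {f : Fin n → (ι →₀ ℕ)} (hf : ∀ i, f i ∈ S)
    {J : Finset (Fin n)} (hsum : ∑ i ∈ J, f i = b) : ∃ j ∈ J, f j = b := by
  have hb0 : b ≠ 0 := by simpa using hb.1.2
  have hex : ∃ j ∈ J, f j ≠ 0 := by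
    by_contra h
    push_neg at h
    exact hb0 (by rw [← hsum, Finset.sum_eq_zero h])
  obtain ⟨j, hj, hj0⟩ := hex
  refine ⟨j, hj, ?_⟩
  have hsplit : f j + ∑ i ∈ J.erase j, f i = b := by
    rw [Finset.add_sum_erase _ _ hj, hsum]
  by_cases hrest : ∑ i ∈ J.erase j, f i = 0
  · rw [hrest, add_zero] at hsplit; exact hsplit
  · exfalso
    apply hb.2
    exact Set.mem_add.mpr ⟨f j, ⟨hf j, by simpa using hj0⟩,
      ∑ i ∈ J.erase j, f i,
      ⟨AddSubmonoid.sum_mem S (fun i _ => hf i), by simpa using hrest⟩, hsplit⟩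

lemma two_le_bound {I : Set ℕ} (S : AddSubmonoid (↥I →₀ ℕ)) (hS : IsIdealExtension S)
    {a b c : ↥I →₀ ℕ} (ha : a ∈ Atoms S) (hb : b ∈ Atoms S) (hc : b = a + c)
    (hcS : c ∉ S) {N : ℕ} (hN : omegaBound S b N) : 2 ≤ N := by
  by_contra hlt
  push_neg at hlt
  have ha0 : a ≠ 0 := by simpa using ha.1.2
  have hb0 : b ≠ 0 := by simpa using hb.1.2
  set f : Fin 2 → (↥I →₀ ℕ) := ![a, a + (c + c)] with hfdef
  have hf : ∀ i, f i ∈ S := by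
    intro i
    fin_cases i
    · exact ha.1.1
    · exact (hS a ⟨ha.1.1, by simpa using ha0⟩ (c + c)).1
  have hdvd : dvdS S b (∑ i, f i) := by
    refine ⟨b, hb.1.1, ?_⟩
    rw [Fin.sum_univ_two]
    show b + b = a + (a + (c + c))
    rw [hc]; abel
  obtain ⟨J, hJc, u, hu, hbu⟩ := hN 2 f hf hdvd
  have hJ1 : J.card ≤ 1 := le_trans hJc (by omega)
  by_cases h0 : (0 : Fin 2) ∈ J <;> by_cases h1 : (1 : Fin 2) ∈ J
  · exact absurd (Finset.card_le_one.mp hJ1 _ h0 _ h1) (by decide)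
  · have hJ : J = {0} := Finset.eq_singleton_iff_unique_mem.mpr
      ⟨h0, fun x hx => by fin_cases x <;> first | rfl | exact absurd hx h1⟩
    rw [hJ, Finset.sum_singleton] at hbu
    -- hbu : b + u = f 0 = a
    have hfa : f 0 = a := rfl
    rw [hfa] at hbu
    have hceq : c = 0 := by
      ext i
      have h1 := fs_app hbu i
      have h2 := fs_app hc i
      simp only [Finsupp.add_apply, Finsupp.coe_zero, Pi.zero_apply] at h1 h2 ⊢
      omega
    exact hcS (hceq ▸ S.zero_mem)
  · have hJ : J = {1} := Finset.eq_singleton_iff_unique_mem.mpr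
      ⟨h1, fun x hx => by fin_cases x <;> first | rfl | exact absurd hx h0⟩
    rw [hJ, Finset.sum_singleton] at hbu
    have hfa : f 1 = a + (c + c) := rfl
    rw [hfa] at hbu
    have hceq : u = c := by
      ext i
      have hh1 := fs_app hbu i
      have hh2 := fs_app hc i
      simp only [Finsupp.add_apply] at hh1 hh2 ⊢
      omega
    exact hcS (hceq ▸ hu)
  · have hJ : J = ∅ := Finset.eq_empty_iff_forall_notMem.mpr
      (fun x hx => by fin_cases x; exacts [h0 hx, h1 hx])
    rw [hJ, Finset.sum_empty] at hbu
    apply hb0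
    ext i
    have hh := fs_app hbu i
    simp only [Finsupp.add_apply, Finsupp.coe_zero, Pi.zero_apply] at hh ⊢
    omega

lemma transfer_bound {I : Set ℕ} (S : AddSubmonoid (↥I →₀ ℕ)) (hS : IsIdealExtension S)
    {a b c : ↥I →₀ ℕ} (ha : a ∈ Atoms S) (hb : b ∈ Atoms S) (hc : b = a + c)
    {N : ℕ} (hN : omegaBound S b N) : omegaBound S a N := by
  rintro n f hf ⟨t, ht, hat⟩
  have ha0 : a ≠ 0 := by simpa using ha.1.2
  have hex : ∃ k, f k ≠ 0 := by
    by_contra h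
    push_neg at h
    rw [Finset.sum_eq_zero (fun i _ => h i)] at hat
    apply ha0
    ext i
    have hh := fs_app hat i
    simp only [Finsupp.add_apply, Finsupp.coe_zero, Pi.zero_apply] at hh ⊢
    omega
  obtain ⟨k, hk⟩ := hex
  set g : Fin n → (↥I →₀ ℕ) := Function.update f k (f k + c) with hgdef
  have hgk : g k = f k + c := Function.update_self _ _ _
  have hgne : ∀ i ≠ k, g i = f i := fun i hi => Function.update_of_ne hi _ _
  have hg : ∀ i, g i ∈ S := by
    intro i
    by_cases hik : i = k
    · subst hik
      rw [hgk]
      exact (hS (f i) ⟨hf i, by simpa using hk⟩ c).1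
    · rw [hgne i hik]; exact hf i
  have hsumg : ∑ i, g i = (∑ i, f i) + c := by
    rw [← Finset.add_sum_erase _ g (Finset.mem_univ k),
        ← Finset.add_sum_erase _ f (Finset.mem_univ k), hgk,
        Finset.sum_congr rfl (fun i hi => hgne i (Finset.ne_of_mem_erase hi))]
    abel
  have hbsum : dvdS S b (∑ i, g i) := ⟨t, ht, by rw [hsumg, ← hat, hc]; abel⟩
  obtain ⟨J, hJcard, u, hu, hbu⟩ := hN n g hg hbsum
  by_cases hkJ : k ∈ J
  · have hJg : ∑ i ∈ J, g i = (∑ i ∈ J, f i) + c := by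
      rw [← Finset.add_sum_erase _ g hkJ, ← Finset.add_sum_erase _ f hkJ, hgk,
          Finset.sum_congr rfl (fun i hi => hgne i (Finset.ne_of_mem_erase hi))]
      abel
    refine ⟨J, hJcard, u, hu, ?_⟩
    apply fs_cancel_right (z := c)
    rw [← hJg, ← hbu, hc]
    abel
  · have hJg : ∑ i ∈ J, g i = ∑ i ∈ J, f i :=
      Finset.sum_congr rfl (fun i hi => hgne i (fun h => hkJ (h ▸ hi)))
    rw [hJg] at hbu
    by_cases hcS : c ∈ S
    · exact ⟨J, hJcard, c + u, S.add_mem hcS hu, by rw [← hbu, hc]; abel⟩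
    · by_cases hu0 : u = 0
      · subst hu0
        rw [add_zero] at hbu
        obtain ⟨j, hjJ, hjb⟩ := atoms_sum_eq S hb hf hbu.symm
        have h2N : 2 ≤ N := two_le_bound S hS ha hb hc hcS hN
        have hjk : j ≠ k := fun h => hkJ (h ▸ hjJ)
        refine ⟨{j, k}, ?_, f k + c, (hS (f k) ⟨hf k, by simpa using hk⟩ c).1, ?_⟩
        · rw [Finset.card_pair hjk]; exact h2N
        · rw [Finset.sum_pair hjk, hjb, hc]; abel
      · refine ⟨J, hJcard, c + u, ?_, by rw [← hbu, hc]; abel⟩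
        have := (hS u ⟨hu, by simpa using hu0⟩ c).1
        rwa [add_comm] at this

end Proof17

theorem statement17 (I : Set ℕ) (hI : I.Nonempty) (S : AddSubmonoid (↥I →₀ ℕ))
    (hS : IsIdealExtension S) (a b : ↥I →₀ ℕ)
    (ha : a ∈ Atoms S) (hb : b ∈ Atoms S) (hab : a ≤ b) :
    omegaVal S a ≤ omegaVal S b := by
  obtain ⟨c, hc⟩ : ∃ c, b = a + c := exists_add_of_le hab
  apply sInf_le_sInf
  rintro N ⟨k, rfl, hk⟩
  exact ⟨k, rfl, transfer_bound S hS ha hb hc hk⟩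
end

section
/- Let S be a submonoid of ℕ². Then S is gap absorbing if and only if S is an ideal extension of ℕ². -/
open Pointwise

namespace Stmt19Aux

open scoped Classical

def inII (I : Set (ℕ × ℕ)) (z : ℕ × ℕ) : Prop := ∃ σ ∈ I, ∃ τ ∈ I, σ + τ = z

def Feas (I : Set (ℕ × ℕ)) (X y c : ℕ) : Prop :=
  ∃ a b : ℕ, a + b = y ∧ c ≤ X ∧ (c, a) ∈ I ∧ (X - c, b) ∈ I

variable {I : Set (ℕ × ℕ)}

lemma up (hup : ∀ s ∈ I, ∀ x : ℕ × ℕ, s + x ∈ I) {m k m' k' : ℕ}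
    (h : (m, k) ∈ I) (h1 : m ≤ m') (h2 : k ≤ k') : (m', k') ∈ I := by
  have := hup _ h (m' - m, k' - k)
  have e : (m, k) + (m' - m, k' - k) = (m', k') := by
    simp only [Prod.mk_add_mk, Prod.mk.injEq]; omega
  rwa [e] at this

lemma inII_up (hup : ∀ s ∈ I, ∀ x : ℕ × ℕ, s + x ∈ I) {m k m' k' : ℕ}
    (h : inII I (m, k)) (h1 : m ≤ m') (h2 : k ≤ k') : inII I (m', k') := by
  obtain ⟨σ, hσ, τ, hτ, he⟩ := h
  refine ⟨σ, hσ, τ + (m' - m, k' - k), hup _ hτ _, ?_⟩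
  rw [← add_assoc, he]
  simp only [Prod.mk_add_mk, Prod.mk.injEq]
  omega

lemma II_subset (hup : ∀ s ∈ I, ∀ x : ℕ × ℕ, s + x ∈ I) {z : ℕ × ℕ}
    (h : inII I z) : z ∈ I := by
  obtain ⟨σ, hσ, τ, hτ, he⟩ := h
  rw [← he]; exact hup _ hσ _

lemma inII_sub (hup : ∀ s ∈ I, ∀ x : ℕ × ℕ, s + x ∈ I) {n k : ℕ}
    (h : inII I (n, k + 1)) : (n, k) ∈ I := by
  obtain ⟨σ, hσ, τ, hτ, he⟩ := h
  have h1 := congrArg Prod.fst he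
  have h2 := congrArg Prod.snd he
  simp at h1 h2
  rcases Nat.eq_zero_or_pos σ.2 with h0 | hpos
  · have := hup _ hσ (τ.1, τ.2 - 1)
    have e : σ + (τ.1, τ.2 - 1) = (n, k) := by
      show (σ.1, σ.2) + _ = _
      simp only [Prod.mk_add_mk, Prod.mk.injEq]; omega
    rwa [e] at this
  · have := hup _ hτ (σ.1, σ.2 - 1)
    have e : τ + (σ.1, σ.2 - 1) = (n, k) := by
      show (τ.1, τ.2) + _ = _
      simp only [Prod.mk_add_mk, Prod.mk.injEq]; omega
    rwa [e] at this

lemma scan (hup : ∀ s ∈ I, ∀ x : ℕ × ℕ, s + x ∈ I) {X y c : ℕ} (hcX : c ≤ X)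
    (hF : ∃ a b : ℕ, a + b = y ∧ (c, a) ∈ I ∧ (X - c, b) ∈ I)
    (h30 : ¬ inII I (c, 0)) (h30' : ¬ inII I (X - c, 0))
    (hδ : ∀ δ, δ + 1 ≤ y → (c, δ) ∈ I → inII I (c, δ + 1) → inII I (X - c, y - δ) → False) :
    ∃ u v : ℕ × ℕ, u ∈ I ∧ v ∈ I ∧ ¬ inII I u ∧ ¬ inII I v ∧ u + v = (X, y) := by
  obtain ⟨a, b, hab, ha, hb⟩ := hF
  have hexA : ∃ n, (c, n) ∈ I := ⟨a, ha⟩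
  have hexB : ∃ n, (X - c, n) ∈ I := ⟨b, hb⟩
  set δ₀ := Nat.find hexA with hδ₀def
  set ε₀ := Nat.find hexB with hε₀def
  have hδ₀ : (c, δ₀) ∈ I := Nat.find_spec hexA
  have hε₀ : (X - c, ε₀) ∈ I := Nat.find_spec hexB
  have hδ₀le : δ₀ ≤ a := Nat.find_min' hexA ha
  have hε₀le : ε₀ ≤ b := Nat.find_min' hexB hb
  have hsum : δ₀ + ε₀ ≤ y := by omega
  set J := y - δ₀ - ε₀ with hJdef
  by_cases hgood : ∃ j, j ≤ J ∧ ¬ inII I (c, δ₀ + j) ∧ ¬ inII I (X - c, y - (δ₀ + j))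
  · obtain ⟨j, hj, h1, h2⟩ := hgood
    refine ⟨(c, δ₀ + j), (X - c, y - (δ₀ + j)), up hup hδ₀ le_rfl (by omega),
      up hup hε₀ le_rfl (by omega), h1, h2, ?_⟩
    simp only [Prod.mk_add_mk, Prod.mk.injEq]
    omega
  · have hbad : ∀ j, j ≤ J → inII I (c, δ₀ + j) ∨ inII I (X - c, y - (δ₀ + j)) := by
      intro j hj
      by_contra hcon
      push_neg at hcon
      exact hgood ⟨j, hj, hcon.1, hcon.2⟩
    have hJ2 : inII I (c, δ₀ + J) := by
      rcases hbad J le_rfl with h | h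
      · exact h
      · exfalso
        have e : y - (δ₀ + J) = ε₀ := by omega
        rw [e] at h
        rcases Nat.eq_zero_or_pos ε₀ with h0 | hpos
        · rw [h0] at h; exact h30' h
        · have : (X - c, ε₀ - 1) ∈ I := by
            have e2 : ε₀ = (ε₀ - 1) + 1 := by omega
            rw [e2] at h
            exact inII_sub hup h
          exact Nat.find_min hexB (by omega) this
    have hexJm : ∃ j, inII I (c, δ₀ + j) := ⟨J, hJ2⟩
    set jm := Nat.find hexJm with hjmdef
    have hjm : inII I (c, δ₀ + jm) := Nat.find_spec hexJm
    have hjmle : jm ≤ J := Nat.find_min' hexJm hJ2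
    have hjmpos : 1 ≤ jm := by
      rcases Nat.eq_zero_or_pos jm with h0 | hpos
      · exfalso
        rw [h0, Nat.add_zero] at hjm
        rcases Nat.eq_zero_or_pos δ₀ with hd0 | hdpos
        · rw [hd0] at hjm; exact h30 hjm
        · have : (c, δ₀ - 1) ∈ I := by
            have e2 : δ₀ = (δ₀ - 1) + 1 := by omega
            rw [e2] at hjm
            exact inII_sub hup hjm
          exact Nat.find_min hexA (by omega) this
      · exact hpos
    have hv : inII I (X - c, y - (δ₀ + (jm - 1))) := by
      rcases hbad (jm - 1) (by omega) with h | h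
      · exact absurd h (Nat.find_min hexJm (by omega))
      · exact h
    exact (hδ (δ₀ + jm - 1) (by omega) (up hup hδ₀ le_rfl (by omega))
      (by have e : δ₀ + jm - 1 + 1 = δ₀ + jm := by omega
          rw [e]; exact hjm)
      (by have e : y - (δ₀ + jm - 1) = y - (δ₀ + (jm - 1)) := by omega
          rw [e]; exact hv)).elim

lemma keyL (hup : ∀ s ∈ I, ∀ x : ℕ × ℕ, s + x ∈ I) {px py qx qy : ℕ}
    (hp : (px, py) ∉ I) (hq : ¬ inII I (qx, qy))
    (hw : inII I (px + qx, py + qy)) :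
    ∃ u v : ℕ × ℕ, u ∈ I ∧ v ∈ I ∧ ¬ inII I u ∧ ¬ inII I v ∧
      u + v = (px + qx, py + qy) := by
  set X := px + qx with hX
  set y := py + qy with hY
  obtain ⟨σ, hσ, τ, hτ, he⟩ := hw
  have e1 : σ.1 + τ.1 = X := by have := congrArg Prod.fst he; simpa using this
  have e2 : σ.2 + τ.2 = y := by have := congrArg Prod.snd he; simpa using this
  have hF0 : Feas I X y σ.1 := by
    refine ⟨σ.2, τ.2, e2, by omega, hσ, ?_⟩
    rw [show X - σ.1 = τ.1 by omega]
    exact hτ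
  by_cases hlo : ∃ c, c ≤ px ∧ Feas I X y c
  · -- LO case
    obtain ⟨c0, hc0le, hc0F⟩ := hlo
    have hex : ∃ j, j ≤ px ∧ Feas I X y (px - j) :=
      ⟨px - c0, by omega, by rw [show px - (px - c0) = c0 by omega]; exact hc0F⟩
    have hspec := Nat.find_spec hex
    set m := Nat.find hex with hm
    set c := px - m with hc
    have hFc : Feas I X y c := hspec.2
    have hcle : c ≤ px := by omega
    have hwin : ∀ e, c < e → e ≤ px → ¬ Feas I X y e := by
      intro e h1 h2 hFe
      exact Nat.find_min hex (show px - e < m by omega)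
        ⟨by omega, by rw [show px - (px - e) = e by omega]; exact hFe⟩
    obtain ⟨a0, b0, hab0, hcX, ha0, hb0⟩ := hFc
    set d := px - c with hd
    have h30 : ¬ inII I (c, 0) := by
      rintro ⟨⟨s1, s2⟩, hs, ⟨t1, t2⟩, ht, hee⟩
      rw [Prod.mk_add_mk, Prod.mk.injEq] at hee
      obtain ⟨hx', hy'⟩ := hee
      exact hp (up hup hs (by omega) (by omega))
    have h30' : ¬ inII I (X - c, 0) := by
      rintro ⟨⟨c3, b1⟩, hB1, ⟨c4, b2⟩, hB2, hee⟩
      rw [Prod.mk_add_mk, Prod.mk.injEq] at hee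
      obtain ⟨hBx, hBy⟩ := hee
      rcases Nat.eq_zero_or_pos d with hd0 | hdpos
      · exact hq (inII_up hup (show inII I (X - c, 0) from ⟨(c3, b1), hB1, (c4, b2), hB2,
          by rw [Prod.mk_add_mk, Prod.mk.injEq]; omega⟩) (by omega) (by omega))
      · rcases le_or_gt d c4 with h4 | h4
        · exact hwin px (by omega) le_rfl ⟨y, 0, by omega, by omega,
            up hup ha0 hcle (by omega), up hup hB1 (by omega) (by omega)⟩
        · rcases le_or_gt d c3 with h3 | h3
          · exact hwin px (by omega) le_rfl ⟨y, 0, by omega, by omega,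
              up hup ha0 hcle (by omega), up hup hB2 (by omega) (by omega)⟩
          · have hc3pos : 1 ≤ c3 := by omega
            refine hwin (c + c3) (by omega) (by omega) ⟨a0, y - a0, by omega, by omega, ?_, ?_⟩
            · have := hup _ ha0 (c3, 0)
              have e : (c, a0) + (c3, 0) = (c + c3, a0) := by
                rw [Prod.mk_add_mk, Prod.mk.injEq]; omega
              rwa [e] at this
            · exact up hup hB2 (by omega) (by omega)
    have hδ : ∀ δ, δ + 1 ≤ y → (c, δ) ∈ I → inII I (c, δ + 1) → inII I (X - c, y - δ) → False := by
      intro δ hδy hcδ hu hv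
      rcases Nat.eq_zero_or_pos d with hd0 | hdpos
      · rcases le_or_gt (y - δ) qy with hle | hgt
        · exact hq (inII_up hup (by rwa [show X - c = qx by omega] at hv) le_rfl hle)
        · exact hp (up hup (show (c, δ + 1) ∈ I from II_subset hup hu) (by omega) (by omega))
      · obtain ⟨⟨c1, a1⟩, hA1, ⟨c2, a2⟩, hA2, hA⟩ := hu
        rw [Prod.mk_add_mk, Prod.mk.injEq] at hA
        obtain ⟨hAx, hAy⟩ := hA
        obtain ⟨⟨c3, b1⟩, hB1, ⟨c4, b2⟩, hB2, hB⟩ := hv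
        rw [Prod.mk_add_mk, Prod.mk.injEq] at hB
        obtain ⟨hBx, hBy⟩ := hB
        rcases le_or_gt d c4 with h4 | h4
        · rcases Nat.eq_zero_or_pos (a1 + b2) with hz | hpos
          · exact hp (up hup hA1 (by omega) (by omega))
          · exact hwin px (by omega) le_rfl ⟨a2, y - a2, by omega, by omega,
              up hup hA2 (by omega) le_rfl, up hup hB1 (by omega) (by omega)⟩
        · rcases le_or_gt d c3 with h3 | h3
          · rcases Nat.eq_zero_or_pos (a1 + b1) with hz | hpos
            · exact hp (up hup hA1 (by omega) (by omega))
            · exact hwin px (by omega) le_rfl ⟨a2, y - a2, by omega, by omega,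
                up hup hA2 (by omega) le_rfl, up hup hB2 (by omega) (by omega)⟩
          · rcases Nat.eq_zero_or_pos b1 with hb1z | hb1pos
            · exact hp (up hup hB1 (by omega) (by omega))
            · refine hwin (c + c3) (by omega) (by omega)
                ⟨δ + b1 - 1, y - (δ + b1 - 1), by omega, by omega, ?_, ?_⟩
              · have := hup _ hcδ (c3, b1 - 1)
                have e : (c, δ) + (c3, b1 - 1) = (c + c3, δ + b1 - 1) := by
                  rw [Prod.mk_add_mk, Prod.mk.injEq]; omega
                rwa [e] at this
              · exact up hup hB2 (by omega) (by omega)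
    obtain ⟨u, v, h1, h2, h3, h4, h5⟩ := scan hup hcX ⟨a0, b0, hab0, ha0, hb0⟩ h30 h30' hδ
    exact ⟨u, v, h1, h2, h3, h4, h5⟩
  · -- HI case
    have hσpx : px < σ.1 := by
      by_contra hcon
      push_neg at hcon
      exact hlo ⟨σ.1, hcon, hF0⟩
    have hex : ∃ n, Feas I X y (px + n) :=
      ⟨σ.1 - px, by rw [show px + (σ.1 - px) = σ.1 by omega]; exact hF0⟩
    have hFc : Feas I X y (px + Nat.find hex) := Nat.find_spec hex
    set m := Nat.find hex with hm
    set c := px + m with hc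
    have hmpos : 1 ≤ m := by
      rcases Nat.eq_zero_or_pos m with h0 | hpos
      · exfalso
        apply hlo
        refine ⟨px, le_rfl, ?_⟩
        rwa [show c = px by omega] at hFc
      · exact hpos
    have hwin : ∀ e, px ≤ e → e < c → ¬ Feas I X y e := by
      intro e h1 h2 hFe
      exact Nat.find_min hex (show e - px < m by omega)
        (by rw [show px + (e - px) = e by omega]; exact hFe)
    obtain ⟨a0, b0, hab0, hcX, ha0, hb0⟩ := hFc
    have hmqx : m ≤ qx := by omega
    have h30 : ¬ inII I (c, 0) := by
      rintro ⟨⟨s1, s2⟩, hs, ⟨t1, t2⟩, ht, hee⟩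
      rw [Prod.mk_add_mk, Prod.mk.injEq] at hee
      obtain ⟨hx', hy'⟩ := hee
      rcases le_or_gt s1 px with h1 | h1
      · exact hp (up hup hs h1 (by omega))
      · rcases le_or_gt t1 px with h2 | h2
        · exact hp (up hup ht h2 (by omega))
        · exact hwin t1 (by omega) (by omega) ⟨0, y, by omega, by omega,
            up hup ht le_rfl (by omega), up hup hs (by omega) (by omega)⟩
    have h30' : ¬ inII I (X - c, 0) := by
      intro h
      exact hq (inII_up hup h (by omega) (by omega))
    have hδ : ∀ δ, δ + 1 ≤ y → (c, δ) ∈ I → inII I (c, δ + 1) → inII I (X - c, y - δ) → False := by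
      intro δ hδy hcδ hu hv
      have hqineq : qy + 1 ≤ y - δ := by
        by_contra hcon
        push_neg at hcon
        exact hq (inII_up hup hv (by omega) (by omega))
      have hδpy : δ + 1 ≤ py := by omega
      obtain ⟨⟨c1, a1⟩, hA1, ⟨c2, a2⟩, hA2, hA⟩ := hu
      rw [Prod.mk_add_mk, Prod.mk.injEq] at hA
      obtain ⟨hAx, hAy⟩ := hA
      rcases le_or_gt c1 px with h1 | h1
      · exact hp (up hup hA1 h1 (by omega))
      · rcases le_or_gt c2 px with h2 | h2
        · exact hp (up hup hA2 h2 (by omega))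
        · obtain ⟨⟨c3, b1⟩, hB1, ⟨c4, b2⟩, hB2, hB⟩ := hv
          rw [Prod.mk_add_mk, Prod.mk.injEq] at hB
          obtain ⟨hBx, hBy⟩ := hB
          rcases Nat.eq_zero_or_pos (a1 + b2) with hz | hpos
          · refine hwin c2 (by omega) (by omega) ⟨a2, b1 - 1, by omega, by omega, hA2, ?_⟩
            have := hup _ hA1 (X - c, b1 - 1)
            have e : (c1, a1) + (X - c, b1 - 1) = (X - c2, b1 - 1) := by
              rw [Prod.mk_add_mk, Prod.mk.injEq]; omega
            rwa [e] at this
          · exact hwin c2 (by omega) (by omega) ⟨a2, y - a2, by omega, by omega, hA2,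
              up hup hB1 (by omega) (by omega)⟩
    obtain ⟨u, v, h1, h2, h3, h4, h5⟩ := scan hup hcX ⟨a0, b0, hab0, ha0, hb0⟩ h30 h30' hδ
    exact ⟨u, v, h1, h2, h3, h4, h5⟩

lemma pair_eq_zero {u : ℕ × ℕ} (h1 : u.1 = 0) (h2 : u.2 = 0) : u = 0 := by
  have : u = (u.1, u.2) := rfl
  rw [this, h1, h2]
  rfl

lemma add_ne_zero_left {u v : ℕ × ℕ} (h : u ≠ 0) : u + v ≠ 0 := by
  intro h0
  apply h
  have h1 := congrArg Prod.fst h0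
  have h2 := congrArg Prod.snd h0
  simp at h1 h2
  have : u = (u.1, u.2) := rfl
  rw [this, Prod.mk.injEq]
  exact ⟨h1.1, h2.1⟩

end Stmt19Aux

theorem statement19 (S : AddSubmonoid (ℕ × ℕ)) :
    IsGapAbsorbing S ↔ IsIdealExtension S := by
  classical
  set I : Set (ℕ × ℕ) := Sstar S with hI
  have hmemI : ∀ z : ℕ × ℕ, z ∈ I ↔ z ∈ (S : Set (ℕ × ℕ)) ∧ z ≠ 0 := by
    intro z
    simp [hI, Sstar]
  have hIsub : ∀ z : ℕ × ℕ, z ∈ I → z ∈ (S : Set (ℕ × ℕ)) := fun z hz => ((hmemI z).mp hz).1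
  have hII_iff : ∀ z : ℕ × ℕ, z ∈ (Sstar S + Sstar S : Set (ℕ × ℕ)) ↔ Stmt19Aux.inII I z := by
    intro z
    rw [Set.mem_add]
    rfl
  have hAtom_iff : ∀ z : ℕ × ℕ, z ∈ Atoms S ↔ z ∈ I ∧ ¬ Stmt19Aux.inII I z := by
    intro z
    unfold Atoms
    rw [Set.mem_diff, hII_iff]
  constructor
  · -- Gap absorbing → ideal extension
    rintro ⟨h1, h2⟩
    have key : ∀ n : ℕ, ∀ s : ℕ × ℕ, s.1 + s.2 ≤ n → s ∈ Sstar S →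
        ∀ x : ℕ × ℕ, s + x ∈ Sstar S := by
      intro n
      induction n with
      | zero =>
        intro s hns hs x
        exfalso
        have hs0 : s ≠ 0 := fun h => hs.2 (by simp [h])
        exact hs0 (Stmt19Aux.pair_eq_zero (by omega) (by omega))
      | succ n ih =>
        intro s hns hs x
        have hs0 : s ≠ 0 := fun h => hs.2 (by simp [h])
        by_cases hxS : x ∈ (S : Set (ℕ × ℕ))
        · refine ⟨S.add_mem hs.1 hxS, ?_⟩
          simp only [Set.mem_singleton_iff]
          exact Stmt19Aux.add_ne_zero_left hs0
        · by_cases hsII : s ∈ (Sstar S + Sstar S : Set (ℕ × ℕ))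
          · rw [Set.mem_add] at hsII
            obtain ⟨σ, hσ, τ, hτ, he⟩ := hsII
            have hσ0 : σ ≠ 0 := fun h => hσ.2 (by simp [h])
            have hσpos : 1 ≤ σ.1 + σ.2 := by
              by_contra hcon
              push_neg at hcon
              exact hσ0 (Stmt19Aux.pair_eq_zero (by omega) (by omega))
            have he1 : σ.1 + τ.1 = s.1 := by have := congrArg Prod.fst he; simpa using this
            have he2 : σ.2 + τ.2 = s.2 := by have := congrArg Prod.snd he; simpa using this
            have hτx : τ + x ∈ Sstar S := ih τ (by omega) hτ x
            have hmem : σ + (τ + x) ∈ Sstar S := by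
              refine ⟨S.add_mem hσ.1 hτx.1, ?_⟩
              simp only [Set.mem_singleton_iff]
              exact Stmt19Aux.add_ne_zero_left hσ0
            rwa [← add_assoc, he] at hmem
          · -- s is an atom
            have hAtom : s ∈ Atoms S := ⟨hs, hsII⟩
            have hx : x ∈ Gaps S := hxS
            have hmem : x + s ∈ Atoms S ∪ (Atoms S + Atoms S) :=
              h2 (Set.mem_add.mpr ⟨x, hx, s, hAtom, rfl⟩)
            have hxs : x + s ∈ Sstar S := by
              rcases hmem with h | h
              · exact h.1
              · rw [Set.mem_add] at h
                obtain ⟨u, hu, v, hv, he2⟩ := h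
                have hu0 : u ≠ 0 := fun hh => hu.1.2 (by simp [hh])
                rw [← he2]
                refine ⟨S.add_mem hu.1.1 hv.1.1, ?_⟩
                simp only [Set.mem_singleton_iff]
                exact Stmt19Aux.add_ne_zero_left hu0
            rwa [add_comm] at hxs
    intro s hs x
    exact key (s.1 + s.2) s le_rfl hs x
  · -- Ideal extension → gap absorbing
    intro hIE
    have hup : ∀ s ∈ I, ∀ x : ℕ × ℕ, s + x ∈ I := hIE
    have hGapNotI : ∀ g : ℕ × ℕ, g ∈ Gaps S → g ∉ I := by
      intro g hg hgI
      exact hg (hIsub g hgI)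
    have hGapNotII : ∀ g : ℕ × ℕ, g ∈ Gaps S → ¬ Stmt19Aux.inII I g := by
      intro g hg hgII
      obtain ⟨σ, hσ, τ, hτ, he⟩ := hgII
      exact hg (by rw [← he]; exact S.add_mem (hIsub σ hσ) (hIsub τ hτ))
    have hkey : ∀ p q : ℕ × ℕ, p ∉ I → ¬ Stmt19Aux.inII I q → Stmt19Aux.inII I (p + q) →
        p + q ∈ Atoms S + Atoms S := by
      intro p q hp hq hw
      obtain ⟨u, v, h1, h2, h3, h4, h5⟩ :=
        Stmt19Aux.keyL hup (px := p.1) (py := p.2) (qx := q.1) (qy := q.2) hp hq hw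
      rw [Set.mem_add]
      refine ⟨u, (hAtom_iff u).mpr ⟨h1, h3⟩, v, (hAtom_iff v).mpr ⟨h2, h4⟩, ?_⟩
      exact h5
    constructor
    · intro w hw
      rw [Set.mem_add] at hw
      obtain ⟨g1, hg1, g2, hg2, rfl⟩ := hw
      by_cases hS : g1 + g2 ∈ (S : Set (ℕ × ℕ))
      · have hg10 : g1 ≠ 0 := fun h => hg1 (by rw [h]; exact S.zero_mem)
        have hIw : g1 + g2 ∈ I := (hmemI _).mpr ⟨hS, Stmt19Aux.add_ne_zero_left hg10⟩
        by_cases hII : Stmt19Aux.inII I (g1 + g2)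
        · right
          exact hkey g1 g2 (hGapNotI g1 hg1) (hGapNotII g2 hg2) hII
        · left; right
          exact (hAtom_iff _).mpr ⟨hIw, hII⟩
      · left; left
        exact hS
    · intro w hw
      rw [Set.mem_add] at hw
      obtain ⟨g, hg, a, ha, rfl⟩ := hw
      have haI : a ∈ I := ((hAtom_iff a).mp ha).1
      have haII : ¬ Stmt19Aux.inII I a := ((hAtom_iff a).mp ha).2
      have hIw : g + a ∈ I := by
        have := hup a haI g
        rwa [add_comm] at this
      by_cases hII : Stmt19Aux.inII I (g + a)
      · right
        exact hkey g a (hGapNotI g hg) haII hII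
      · left
        exact (hAtom_iff _).mpr ⟨hIw, hII⟩
end
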